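/- Let A ∈ ℝ^{n×n} be nonsingular with Aᵀ M A = M for a symmetric nonsingular M, i.e. A lies in the automorphism group 𝔾. Then the cubic Padé sign update g(A) = A(3I + A²)(I + 3A²)⁻¹ (assuming I + 3A² invertible) again satisfies g(A)ᵀ M g(A) = M. -/
import Mathlib


open Matrix

/-- For a nonsingular real automorphism `A` (`AᵀMA = M`, `M` symmetric nonsingular),
the cubic Padé sign update `g(A) = A(3I + A²)(I + 3A²)⁻¹` again satisfies
`g(A)ᵀ M g(A) = M`. -/
theorem cubic_pade_sign_step_preserves_automorphism {n : ℕ}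
    (M A : Matrix (Fin n) (Fin n) ℝ)
    (hMsymm : Mᵀ = M) (hM : IsUnit M) (hAunit : IsUnit A)
    (hA : Aᵀ * M * A = M)
    (hwd : IsUnit (1 + 3 * A ^ 2)) :
    (A * (3 + A ^ 2) * (1 + 3 * A ^ 2)⁻¹)ᵀ * M *
      (A * (3 + A ^ 2) * (1 + 3 * A ^ 2)⁻¹) = M := by
  have h2 : Aᵀ ^ 2 * M * A ^ 2 = M := by
    have : Aᵀ ^ 2 * M * A ^ 2 = Aᵀ * (Aᵀ * M * A) * A := by noncomm_ring
    rw [this, hA, hA]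
  have key : (3 + Aᵀ ^ 2) * M * (3 + A ^ 2)
      = (1 + 3 * Aᵀ ^ 2) * M * (1 + 3 * A ^ 2) := by
    have expand : (3 + Aᵀ ^ 2) * M * (3 + A ^ 2)
        = (1 + 3 * Aᵀ ^ 2) * M * (1 + 3 * A ^ 2) + 8 * M - 8 * (Aᵀ ^ 2 * M * A ^ 2) := by
      noncomm_ring
    rw [expand, h2]; noncomm_ring
  have ht3 : (3 + A ^ 2)ᵀ = 3 + Aᵀ ^ 2 := by
    simp [transpose_add, transpose_pow]
  have htC : (1 + 3 * A ^ 2)ᵀ = 1 + 3 * Aᵀ ^ 2 := by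
    simp only [transpose_add, transpose_one, Matrix.transpose_mul, transpose_pow, Matrix.transpose_ofNat]
    rw [(Commute.ofNat_right (Aᵀ ^ 2) 3).eq]
  have hdC : IsUnit (1 + 3 * A ^ 2).det := (isUnit_iff_isUnit_det _).mp hwd
  have hdCt : IsUnit (1 + 3 * Aᵀ ^ 2).det := by
    rw [← htC, det_transpose]; exact hdC
  rw [transpose_mul, transpose_mul, transpose_nonsing_inv, ht3, htC]
  calc _ = (1 + 3 * Aᵀ ^ 2)⁻¹ * ((3 + Aᵀ ^ 2) * (Aᵀ * M * A) * (3 + A ^ 2)) *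
        (1 + 3 * A ^ 2)⁻¹ := by noncomm_ring
    _ = (1 + 3 * Aᵀ ^ 2)⁻¹ * ((1 + 3 * Aᵀ ^ 2) * M * (1 + 3 * A ^ 2)) *
        (1 + 3 * A ^ 2)⁻¹ := by rw [hA, key]
    _ = ((1 + 3 * Aᵀ ^ 2)⁻¹ * (1 + 3 * Aᵀ ^ 2)) * M *
        ((1 + 3 * A ^ 2) * (1 + 3 * A ^ 2)⁻¹) := by noncomm_ring
    _ = M := by
        rw [Matrix.nonsing_inv_mul _ hdCt, Matrix.mul_nonsing_inv _ hdC, one_mul, mul_one]
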